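/- The (n+1)×(n+1) matrix C^{(n,N)} with entries C_{q,k} = 1/C(N, k+q) for q,k ∈ {0,...,n}, where N ≥ 2n, has nonzero determinant. -/

import Mathlib

open intervalIntegral in
lemma beta_nat (b a : ℕ) : ∫ x in (0:ℝ)..1, x^a * (1-x)^b
    = (a.factorial * b.factorial : ℝ) / (a+b+1).factorial := by
  induction b generalizing a with
  | zero =>
    simp [integral_pow, Nat.factorial_succ]
    rw [eq_div_iff (by positivity)]
    field_simp
  | succ b ih =>
    have hderiv : ∀ x ∈ Set.uIcc (0:ℝ) 1, HasDerivAt (fun x : ℝ => x^(a+1)*(1-x)^(b+1))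
        ((a+1:ℝ) * (x^a * (1-x)^(b+1)) - (b+1) * (x^(a+1) * (1-x)^b)) x := by
      intro x _
      have h1 : HasDerivAt (fun x : ℝ => (1-x)^(b+1)) (-((b+1) * (1-x)^b)) x := by
        have := ((hasDerivAt_pow (b+1) (1-x)).comp x
          ((hasDerivAt_const x (1:ℝ)).sub (hasDerivAt_id x)))
        simpa [Function.comp_def] using this
      have := (hasDerivAt_pow (a+1) x).mul h1
      refine this.congr_deriv ?_
      push_cast [Nat.add_sub_cancel]
      ring
    have key := integral_eq_sub_of_hasDerivAt hderiv (by
      apply Continuous.intervalIntegrable; continuity)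
    simp at key
    have h1 : IntervalIntegrable (fun x : ℝ => x^a * (1-x)^(b+1)) MeasureTheory.volume 0 1 := by
      apply Continuous.intervalIntegrable; continuity
    have h2 : IntervalIntegrable (fun x : ℝ => x^(a+1) * (1-x)^b) MeasureTheory.volume 0 1 := by
      apply Continuous.intervalIntegrable; continuity
    rw [integral_sub ((h1.const_mul _)) ((h2.const_mul _)),
      integral_const_mul, integral_const_mul, sub_eq_zero] at key
    have hI : ∫ x in (0:ℝ)..1, x^a * (1-x)^(b+1)
        = ((b:ℝ)+1)/((a:ℝ)+1) * ∫ x in (0:ℝ)..1, x^(a+1) * (1-x)^b := by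
      field_simp
      linarith [key]
    rw [hI, ih (a+1)]
    have e1 : a + 1 + b + 1 = a + (b+1) + 1 := by omega
    rw [e1]
    rw [div_mul_div_comm, div_eq_div_iff (by positivity) (by positivity)]
    push_cast [Nat.factorial_succ]
    ring

open intervalIntegral Polynomial Matrix in
theorem stmt17 (n N : ℕ) (hN : 2 * n ≤ N) :
    (Matrix.of fun q k : Fin (n + 1) =>
        (1 : ℚ) / (N.choose ((k : ℕ) + (q : ℕ)) : ℚ)).det ≠ 0 := by
  set A : Matrix (Fin (n+1)) (Fin (n+1)) ℚ := Matrix.of fun q k : Fin (n + 1) =>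
        (1 : ℚ) / (N.choose ((k : ℕ) + (q : ℕ)) : ℚ) with hA
  set M : Matrix (Fin (n+1)) (Fin (n+1)) ℝ := A.map ((↑) : ℚ → ℝ) with hM
  have hdet : M.det = ((A.det : ℚ) : ℝ) := by
    simpa using (RingHom.map_det (Rat.castHom ℝ) A).symm
  -- entries of M
  have hMe : ∀ q k : Fin (n+1), M q k = ((N.choose ((q:ℕ)+(k:ℕ)) : ℝ))⁻¹ := by
    intro q k
    simp [hM, hA, one_div, Nat.add_comm]
  -- integral representation of entries
  have hrep : ∀ m : ℕ, m ≤ N → ((N.choose m : ℝ))⁻¹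
      = ((N:ℝ)+1) * ∫ t in (0:ℝ)..1, t^m * (1-t)^(N-m) := by
    intro m hm
    rw [beta_nat]
    have e : m + (N-m) + 1 = N+1 := by omega
    rw [e]
    have hc := Nat.choose_mul_factorial_mul_factorial hm
    have hc0 : (N.choose m : ℝ) ≠ 0 := by
      exact_mod_cast Nat.choose_pos hm |>.ne'
    rw [Nat.factorial_succ]
    field_simp
    push_cast [← hc]
    ring
  suffices hpd : M.PosDef by
    intro h0
    have := hpd.det_pos
    rw [hdet, h0] at this
    simp at this
  rw [Matrix.posDef_iff_dotProduct_mulVec]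
  constructor
  · -- Hermitian
    ext i j
    simp [Matrix.IsHermitian, hM, hA, Matrix.conjTranspose_apply, Nat.add_comm]
  · intro x hx
    -- the polynomial Q = ∑ x i • X^i
    set Q : ℝ[X] := ∑ i : Fin (n+1), Polynomial.C (x i) * X^(i:ℕ) with hQ
    have hQcoeff : ∀ i : Fin (n+1), Q.coeff i = x i := by
      intro i
      rw [hQ, Polynomial.finset_sum_coeff]
      rw [Finset.sum_eq_single i]
      · simp
      · intro b _ hb
        simp [Polynomial.coeff_C_mul, Polynomial.coeff_X_pow, Fin.val_eq_val, Ne.symm hb]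
      · simp
    have hQne : Q ≠ 0 := by
      intro h
      apply hx
      funext i
      have := hQcoeff i
      rw [h] at this
      simpa using this.symm
    -- g : the Bernstein-type combination
    set g : ℝ → ℝ := fun t => ∑ i : Fin (n+1), x i * (t^(i:ℕ) * (1-t)^(n-(i:ℕ))) with hg
    have hexp : ∀ t : ℝ, (g t)^2 * (1-t)^(N-2*n)
        = ∑ q : Fin (n+1), ∑ k : Fin (n+1),
            x q * x k * (t^((q:ℕ)+(k:ℕ)) * (1-t)^(N-((q:ℕ)+(k:ℕ)))) := by
      intro t
      rw [hg, sq, Finset.sum_mul_sum, Finset.sum_mul]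
      refine Finset.sum_congr rfl fun q _ => ?_
      rw [Finset.sum_mul]
      refine Finset.sum_congr rfl fun k _ => ?_
      have hq : (q:ℕ) ≤ n := Nat.lt_succ_iff.mp q.isLt
      have hk : (k:ℕ) ≤ n := Nat.lt_succ_iff.mp k.isLt
      have e1 : (n-(q:ℕ)) + ((n-(k:ℕ)) + (N-2*n)) = N-((q:ℕ)+(k:ℕ)) := by omega
      have e2 : (1-t)^(N-((q:ℕ)+(k:ℕ)))
          = (1-t)^(n-(q:ℕ)) * ((1-t)^(n-(k:ℕ)) * (1-t)^(N-2*n)) := by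
        rw [← pow_add, ← pow_add, e1]
      rw [e2, pow_add]
      ring
    have hint : ∀ (q k : Fin (n+1)), IntervalIntegrable
        (fun t : ℝ => x q * x k * (t^((q:ℕ)+(k:ℕ)) * (1-t)^(N-((q:ℕ)+(k:ℕ)))))
        MeasureTheory.volume 0 1 := by
      intro q k; apply Continuous.intervalIntegrable; fun_prop
    have hform : star x ⬝ᵥ (M *ᵥ x)
        = ((N:ℝ)+1) * ∫ t in (0:ℝ)..1, (g t)^2 * (1-t)^(N-2*n) := by
      simp only [hexp]
      rw [intervalIntegral.integral_finset_sum (fun q _ => by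
        apply Continuous.intervalIntegrable; fun_prop)]
      rw [Finset.mul_sum]
      have : star x ⬝ᵥ (M *ᵥ x) = ∑ q : Fin (n+1), ∑ k : Fin (n+1),
          x q * (((N.choose ((q:ℕ)+(k:ℕ)) : ℝ))⁻¹ * x k) := by
        simp [dotProduct, Matrix.mulVec, hMe, Finset.mul_sum]
      rw [this]
      refine Finset.sum_congr rfl fun q _ => ?_
      rw [intervalIntegral.integral_finset_sum (fun k _ => hint q k), Finset.mul_sum]
      refine Finset.sum_congr rfl fun k _ => ?_
      have hle : (q:ℕ)+(k:ℕ) ≤ N := by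
        have hq : (q:ℕ) ≤ n := Nat.lt_succ_iff.mp q.isLt
        have hk : (k:ℕ) ≤ n := Nat.lt_succ_iff.mp k.isLt
        omega
      rw [hrep _ hle, intervalIntegral.integral_const_mul]
      ring
    rw [hform]
    -- positivity of the integral
    have hroots : {t : ℝ | Q.IsRoot t}.Finite :=
      Set.not_infinite.mp (fun h => hQne (Q.eq_zero_of_infinite_isRoot h))
    have hne : ((Set.Ioo (0:ℝ) 1) \ {t : ℝ | Q.IsRoot t}).Nonempty :=
      ((Set.Ioo_infinite (by norm_num)).diff hroots).nonempty
    obtain ⟨s, hs, hsr⟩ := hne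
    obtain ⟨hs0, hs1⟩ := hs
    have h1s : (0:ℝ) < 1 + s := by linarith
    set t0 : ℝ := s/(1+s) with ht0
    have ht00 : 0 < t0 := div_pos hs0 h1s
    have ht01 : t0 < 1 := (div_lt_one h1s).mpr (by linarith)
    have hgt0 : g t0 = ((1+s)⁻¹)^n * Q.eval s := by
      rw [hg, hQ]
      simp only [Polynomial.eval_finset_sum, Polynomial.eval_mul, Polynomial.eval_C,
        Polynomial.eval_pow, Polynomial.eval_X]
      rw [Finset.mul_sum]
      refine Finset.sum_congr rfl fun i _ => ?_
      have hi : (i:ℕ) ≤ n := Nat.lt_succ_iff.mp i.isLt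
      have e : (i:ℕ) + (n - (i:ℕ)) = n := by omega
      have h2 : (1 : ℝ) - t0 = (1+s)⁻¹ := by
        rw [ht0]; field_simp; ring
      have e2 : (((1:ℝ)+s)⁻¹)^n = ((1+s)⁻¹)^(i:ℕ) * ((1+s)⁻¹)^(n-(i:ℕ)) := by
        rw [← pow_add, e]
      rw [h2, e2, ht0, div_pow, div_eq_mul_inv, ← inv_pow]
      ring
    have hgne : g t0 ≠ 0 := by
      rw [hgt0]
      exact mul_ne_zero (pow_ne_zero _ (inv_ne_zero h1s.ne')) hsr
    apply mul_pos (by positivity)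
    apply intervalIntegral.integral_pos (by norm_num)
    · apply Continuous.continuousOn; fun_prop
    · intro t ht
      have : (0:ℝ) ≤ 1 - t := by linarith [ht.2]
      positivity
    · refine ⟨t0, ⟨le_of_lt ht00, le_of_lt ht01⟩, ?_⟩
      have h1t : (0:ℝ) < 1 - t0 := by linarith
      positivity
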